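/- For the explicit piecewise linear density f, let s_{n,1}, s_{n,2}, s_{n,3} denote the (constant) slopes of f on the intervals J_{n,1} = (a_n, b_n], J_{n,2} = (b_n, c_n], J_{n,3} = (c_n, a_{n+1}] respectively. Then for each i ∈ {1,2,3}, |s_{n,i}| / inf_{x ∈ J_{n,i}} f(x) → 0 as n → ∞. -/

import Mathlib

open MeasureTheory Filter Set

noncomputable section

/-- `a_n = 2^(n²)`. -/
def aSeq (n : ℕ) : ℝ := 2 ^ (n ^ 2)

/-- `m_n` : the least positive integer `k` with `k ≥ (√5/√6)·n`. -/
def mIdx (n : ℕ) : ℕ := max 1 ⌈(Real.sqrt 5 / Real.sqrt 6) * (n : ℝ)⌉₊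

/-- `b_n = a_n + a_{m_n}·(ln (n+1))²`. -/
def bSeq (n : ℕ) : ℝ := aSeq n + aSeq (mIdx n) * (Real.log ((n : ℝ) + 1)) ^ 2

/-- `c_n = (a_{n+1} + b_n)/2`. -/
def cSeq (n : ℕ) : ℝ := (aSeq (n + 1) + bSeq n) / 2

/-- `f` is affine (the linear interpolation of its endpoint values) on `[p, q]`. -/
def AffineOnIcc (f : ℝ → ℝ) (p q : ℝ) : Prop :=
  ∀ x ∈ Set.Icc p q, f x = f p + (x - p) / (q - p) * (f q - f p)

/-- The explicit continuous piecewise linear construction `f₀ : [0,∞) → (0,∞)`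
with `f₀(0) = 1`, `f₀(a_n) = 2 a_n⁻³`, `f₀(b_n) = 2 a_n⁻³ / ln(n+1)`,
`f₀(c_n) = 2 a_n⁻³`, affine on `[0,a₁]`, `[a_n,b_n]`, `[b_n,c_n]`, `[c_n,a_{n+1}]`. -/
def PWConstruction (f₀ : ℝ → ℝ) : Prop :=
  ContinuousOn f₀ (Set.Ici 0) ∧
  (∀ x : ℝ, 0 ≤ x → 0 < f₀ x) ∧
  f₀ 0 = 1 ∧
  (∀ n : ℕ, 1 ≤ n →
    f₀ (aSeq n) = 2 / (aSeq n) ^ 3 ∧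
    f₀ (bSeq n) = 2 / (aSeq n) ^ 3 / Real.log ((n : ℝ) + 1) ∧
    f₀ (cSeq n) = 2 / (aSeq n) ^ 3) ∧
  AffineOnIcc f₀ 0 (aSeq 1) ∧
  (∀ n : ℕ, 1 ≤ n →
    AffineOnIcc f₀ (aSeq n) (bSeq n) ∧
    AffineOnIcc f₀ (bSeq n) (cSeq n) ∧
    AffineOnIcc f₀ (cSeq n) (aSeq (n + 1)))

/-- The normalized extension `f = f₀ / ∫₀^∞ f₀(y) dy`, extended by `0` on `(-∞,0)`. -/
def normExt (f₀ : ℝ → ℝ) : ℝ → ℝ :=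
  fun x => if x < 0 then 0 else f₀ x / ∫ y in Set.Ici (0:ℝ), f₀ y

lemma aSeq_pos (n : ℕ) : 0 < aSeq n := by unfold aSeq; positivity

lemma term_le {f₀ : ℝ → ℝ} {I : ℝ} (hI : 0 < I) {p q : ℝ} (hpq : p < q)
    (haff : AffineOnIcc f₀ p q) (hfp : 0 < f₀ p) (hfq : 0 < f₀ q) :
    |(f₀ q / I - f₀ p / I) / (q - p)| / sInf ((fun x => f₀ x / I) '' Set.Ioc p q) ≤
      |f₀ q - f₀ p| / ((q - p) * min (f₀ p) (f₀ q)) := by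
  have hqp : 0 < q - p := sub_pos.mpr hpq
  have hmin : 0 < min (f₀ p) (f₀ q) := lt_min hfp hfq
  have hne : (Set.Ioc p q).Nonempty := Set.nonempty_Ioc.mpr hpq
  have hlb : min (f₀ p) (f₀ q) / I ≤ sInf ((fun x => f₀ x / I) '' Set.Ioc p q) := by
    apply le_csInf (hne.image _)
    rintro y ⟨x, hx, rfl⟩
    have hfx := haff x ⟨hx.1.le, hx.2⟩
    have ht0 : 0 ≤ (x - p) / (q - p) := div_nonneg (by linarith [hx.1]) hqp.le
    have ht1 : (x - p) / (q - p) ≤ 1 := (div_le_one hqp).mpr (by linarith [hx.2])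
    have hge : min (f₀ p) (f₀ q) ≤ f₀ x := by
      rw [hfx]
      nlinarith [min_le_left (f₀ p) (f₀ q), min_le_right (f₀ p) (f₀ q),
        mul_nonneg ht0 (sub_nonneg.mpr (min_le_right (f₀ p) (f₀ q))),
        mul_nonneg (sub_nonneg.mpr ht1) (sub_nonneg.mpr (min_le_left (f₀ p) (f₀ q)))]
    exact (div_le_div_iff_of_pos_right hI).mpr hge
  have hnum : |(f₀ q / I - f₀ p / I) / (q - p)| = |f₀ q - f₀ p| / ((q - p) * I) := by
    have h1 : (f₀ q / I - f₀ p / I) / (q - p) = (f₀ q - f₀ p) / ((q - p) * I) := by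
      field_simp
    rw [h1, abs_div, abs_of_pos (by positivity : (0:ℝ) < (q - p) * I)]
  rw [hnum]
  have h2 : |f₀ q - f₀ p| / ((q - p) * I) / (min (f₀ p) (f₀ q) / I) =
      |f₀ q - f₀ p| / ((q - p) * min (f₀ p) (f₀ q)) := by
    field_simp
  calc |f₀ q - f₀ p| / ((q - p) * I) / sInf ((fun x => f₀ x / I) '' Set.Ioc p q)
      ≤ |f₀ q - f₀ p| / ((q - p) * I) / (min (f₀ p) (f₀ q) / I) :=
        div_le_div_of_nonneg_left (by positivity) (by positivity) hlb
    _ = _ := h2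

lemma arith1 {X L A N : ℝ} (hX : 0 < X) (hL : 1 ≤ L) (hA : 0 < A) (hN : 0 < N)
    (hNA : N ≤ 2 * A) : (X - X / L) / (A * L ^ 2 * (X / L)) ≤ 2 / N := by
  have hL0 : 0 < L := lt_of_lt_of_le one_pos hL
  have hY : 0 < X / L := div_pos hX hL0
  have h2 : X - X / L = X / L * (L - 1) := by field_simp
  rw [h2, div_le_div_iff₀ (by positivity) hN]
  nlinarith [mul_nonneg (mul_nonneg (sub_nonneg.mpr hNA) (sq_nonneg L)) hY.le,
    mul_nonneg (mul_nonneg hN.le hY.le) (by nlinarith [sq_nonneg (L - 1)] : (0:ℝ) ≤ L ^ 2 - L + 1)]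

lemma arith2 {X L D N : ℝ} (hX : 0 < X) (hL : 1 ≤ L) (hD : 0 < D) (hN : 0 < N)
    (hND : (L - 1) * N ≤ D) : (X - X / L) / (D / 2 * (X / L)) ≤ 2 / N := by
  have hL0 : 0 < L := lt_of_lt_of_le one_pos hL
  have hY : 0 < X / L := div_pos hX hL0
  have h2 : X - X / L = X / L * (L - 1) := by field_simp
  rw [h2, div_le_div_iff₀ (by positivity) hN]
  nlinarith [mul_le_mul_of_nonneg_right hND hY.le]

lemma arith3 {X X' D N : ℝ} (hX' : 0 < X') (hD : 0 < D) (hN : 0 < N)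
    (h : (X - X') * N ≤ D * X') : (X - X') / (D / 2 * X') ≤ 2 / N := by
  rw [div_le_div_iff₀ (by positivity) hN]
  nlinarith

lemma nat_sq_lt (n : ℕ) : n ^ 2 < 2 ^ (2 * n) := by
  calc n ^ 2 < (2 ^ n) ^ 2 := Nat.pow_lt_pow_left (Nat.lt_two_pow_self (n := n)) two_ne_zero
    _ = 2 ^ (2 * n) := by rw [← pow_mul, mul_comm]

lemma natkey (n : ℕ) (hn : 6 ≤ n) : 2 * n * (2 ^ ((n + 1) ^ 2)) ^ 2 ≤ (2 ^ (n ^ 2)) ^ 3 := by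
  have h0 := Nat.lt_two_pow_self (n := n)
  have h1 : 2 * n ≤ 2 ^ (n + 1) := by
    calc 2 * n ≤ 2 * 2 ^ n := by omega
      _ = 2 ^ (n + 1) := by rw [pow_succ]; ring
  calc 2 * n * (2 ^ ((n + 1) ^ 2)) ^ 2 ≤ 2 ^ (n + 1) * (2 ^ ((n + 1) ^ 2)) ^ 2 :=
        Nat.mul_le_mul_right _ h1
    _ = 2 ^ ((n + 1) + (n + 1) ^ 2 * 2) := by rw [← pow_mul, ← pow_add]
    _ ≤ 2 ^ (n ^ 2 * 3) := by
        apply Nat.pow_le_pow_right (by norm_num)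
        nlinarith [Nat.mul_le_mul hn hn]
    _ = (2 ^ (n ^ 2)) ^ 3 := by rw [pow_mul]

set_option maxHeartbeats 2000000 in
theorem pw_density_slopes_negligible (f₀ : ℝ → ℝ)
    (hf₀ : PWConstruction f₀) (f : ℝ → ℝ) (hf : f = normExt f₀) :
    Tendsto (fun n : ℕ =>
        |(f (bSeq n) - f (aSeq n)) / (bSeq n - aSeq n)| /
          sInf (f '' Set.Ioc (aSeq n) (bSeq n))) atTop (nhds 0) ∧
    Tendsto (fun n : ℕ =>
        |(f (cSeq n) - f (bSeq n)) / (cSeq n - bSeq n)| /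
          sInf (f '' Set.Ioc (bSeq n) (cSeq n))) atTop (nhds 0) ∧
    Tendsto (fun n : ℕ =>
        |(f (aSeq (n + 1)) - f (cSeq n)) / (aSeq (n + 1) - cSeq n)| /
          sInf (f '' Set.Ioc (cSeq n) (aSeq (n + 1)))) atTop (nhds 0) := by
  obtain ⟨-, hpos, -, hvals, -, haffn⟩ := hf₀
  have hI0 : 0 ≤ ∫ y in Set.Ici (0:ℝ), f₀ y :=
    setIntegral_nonneg measurableSet_Ici fun x hx => (hpos x hx).le
  rcases eq_or_lt_of_le hI0 with hI | hI
  · -- degenerate case: the normalizing integral is zero, so `f ≡ 0`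
    have hfz : f = fun _ => 0 := by
      funext x
      rw [hf]
      unfold normExt
      split_ifs with h
      · rfl
      · rw [← hI, div_zero]
    refine ⟨?_, ?_, ?_⟩ <;>
      · rw [hfz]
        simpa using (tendsto_const_nhds : Tendsto (fun _ : ℕ => (0:ℝ)) atTop (nhds 0))
  · -- main case
    have hfx : ∀ x : ℝ, 0 ≤ x → f x = f₀ x / ∫ y in Set.Ici (0:ℝ), f₀ y := by
      intro x hx
      rw [hf]
      unfold normExt
      rw [if_neg (not_lt.mpr hx)]
    have hfnn : ∀ x, 0 ≤ f x := by
      intro x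
      rw [hf]
      unfold normExt
      split_ifs with h
      · exact le_rfl
      · exact div_nonneg (hpos x (not_lt.mp h)).le hI0
    have himg : ∀ p q : ℝ, 0 < p →
        f '' Set.Ioc p q = (fun x => f₀ x / ∫ y in Set.Ici (0:ℝ), f₀ y) '' Set.Ioc p q :=
      fun p q hp => Set.image_congr fun x hx => hfx x (hp.trans hx.1).le
    have key : ∀ n : ℕ, 6 ≤ n →
        (|(f (bSeq n) - f (aSeq n)) / (bSeq n - aSeq n)| /
            sInf (f '' Set.Ioc (aSeq n) (bSeq n)) ≤ 2 / n) ∧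
        (|(f (cSeq n) - f (bSeq n)) / (cSeq n - bSeq n)| /
            sInf (f '' Set.Ioc (bSeq n) (cSeq n)) ≤ 2 / n) ∧
        (|(f (aSeq (n + 1)) - f (cSeq n)) / (aSeq (n + 1) - cSeq n)| /
            sInf (f '' Set.Ioc (cSeq n) (aSeq (n + 1))) ≤ 2 / n) := by
      intro n hn
      have hn1 : (1:ℕ) ≤ n := by omega
      have hnR : (6:ℝ) ≤ (n:ℝ) := by exact_mod_cast hn
      have hn0 : (0:ℝ) < n := by linarith
      have hL1 : 1 ≤ Real.log ((n:ℝ) + 1) := by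
        rw [Real.le_log_iff_exp_le (by positivity)]
        have := Real.exp_one_lt_d9
        linarith
      have hL0 : 0 < Real.log ((n:ℝ) + 1) := lt_of_lt_of_le one_pos hL1
      have hLn : Real.log ((n:ℝ) + 1) ≤ n := by
        have := Real.log_le_sub_one_of_pos (show (0:ℝ) < (n:ℝ) + 1 by positivity)
        linarith
      have hu : 0 < aSeq n := aSeq_pos n
      have hv : 0 < aSeq (n + 1) := aSeq_pos (n + 1)
      have hA : 0 < aSeq (mIdx n) := aSeq_pos _
      have h6p : 0 < Real.sqrt 6 := Real.sqrt_pos.mpr (by norm_num)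
      have h5two : (2:ℝ) ≤ Real.sqrt 5 := by
        rw [show (2:ℝ) = Real.sqrt 4 by
          rw [show (4:ℝ) = 2 ^ 2 by norm_num, Real.sqrt_sq (by norm_num : (0:ℝ) ≤ 2)]]
        exact Real.sqrt_le_sqrt (by norm_num)
      have h6three : Real.sqrt 6 ≤ 3 := by
        rw [show (3:ℝ) = Real.sqrt 9 by
          rw [show (9:ℝ) = 3 ^ 2 by norm_num, Real.sqrt_sq (by norm_num : (0:ℝ) ≤ 3)]]
        exact Real.sqrt_le_sqrt (by norm_num)
      have hc_half : (1:ℝ) / 2 ≤ Real.sqrt 5 / Real.sqrt 6 := by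
        rw [div_le_div_iff₀ (by norm_num) h6p]
        linarith
      have hc_one : Real.sqrt 5 / Real.sqrt 6 ≤ 1 := by
        rw [div_le_one h6p]
        exact Real.sqrt_le_sqrt (by norm_num)
      have hmn : mIdx n ≤ n := by
        refine max_le (by omega) (Nat.ceil_le.mpr ?_)
        have := mul_le_mul_of_nonneg_right hc_one (Nat.cast_nonneg (α := ℝ) n)
        simpa using this
      have hma : aSeq (mIdx n) ≤ aSeq n := by
        unfold aSeq
        exact pow_le_pow_right₀ one_le_two (Nat.pow_le_pow_left hmn 2)
      have hAn : (n:ℝ) ≤ 2 * aSeq (mIdx n) := by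
        have s1 : (n:ℝ) / 2 ≤ (mIdx n : ℝ) := by
          calc (n:ℝ) / 2 = 1 / 2 * n := by ring
            _ ≤ Real.sqrt 5 / Real.sqrt 6 * n :=
              mul_le_mul_of_nonneg_right hc_half (Nat.cast_nonneg n)
            _ ≤ (⌈Real.sqrt 5 / Real.sqrt 6 * (n:ℝ)⌉₊ : ℝ) := Nat.le_ceil _
            _ ≤ (mIdx n : ℝ) := by
              exact_mod_cast Nat.cast_le.mpr (le_max_right 1 _)
        have s2 : (mIdx n : ℝ) ≤ aSeq (mIdx n) := by
          have : mIdx n ≤ 2 ^ (mIdx n ^ 2) :=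
            le_trans (Nat.le_self_pow two_ne_zero _) (Nat.lt_two_pow_self).le
          unfold aSeq
          exact_mod_cast this
        linarith
      have h3 : (1:ℝ) + (n:ℝ) ^ 2 ≤ 2 ^ (2 * n) := by
        have h := nat_sq_lt n
        have : 1 + n ^ 2 ≤ 2 ^ (2 * n) := by omega
        exact_mod_cast this
      have e1 : aSeq (n + 1) = aSeq n * 2 ^ (2 * n) * 2 := by
        unfold aSeq
        rw [show (n + 1) ^ 2 = n ^ 2 + 2 * n + 1 by ring, pow_add, pow_add, pow_one]
      have hu1 : (1:ℝ) ≤ aSeq n := by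
        unfold aSeq
        exact one_le_pow₀ one_le_two
      have hbhalf : bSeq n ≤ aSeq (n + 1) / 2 := by
        have h4 : aSeq (mIdx n) * Real.log ((n:ℝ) + 1) ^ 2 ≤ aSeq n * (n:ℝ) ^ 2 :=
          mul_le_mul hma (pow_le_pow_left₀ hL0.le hLn 2) (by positivity) hu.le
        have h5 : aSeq n * (1 + (n:ℝ) ^ 2) ≤ aSeq n * 2 ^ (2 * n) :=
          mul_le_mul_of_nonneg_left h3 hu.le
        unfold bSeq
        rw [e1]
        nlinarith
      have hab : aSeq n < bSeq n := by
        unfold bSeq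
        nlinarith [mul_pos hA (mul_pos hL0 hL0)]
      have hbc : bSeq n < cSeq n := by
        unfold cSeq
        linarith
      have hca : cSeq n < aSeq (n + 1) := by
        unfold cSeq
        linarith
      have hb0 : 0 < bSeq n := lt_trans hu hab
      have hc0 : 0 < cSeq n := lt_trans hb0 hbc
      obtain ⟨hva, hvb, hvc⟩ := hvals n hn1
      have hva' := (hvals (n + 1) (by omega)).1
      obtain ⟨haff1, haff2, haff3⟩ := haffn n hn1
      have hfpa : 0 < f₀ (aSeq n) := hpos _ hu.le
      have hfpb : 0 < f₀ (bSeq n) := hpos _ hb0.le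
      have hfpc : 0 < f₀ (cSeq n) := hpos _ hc0.le
      have hfpa' : 0 < f₀ (aSeq (n + 1)) := hpos _ hv.le
      have hX : 0 < 2 / aSeq n ^ 3 := by positivity
      have hXL : 2 / aSeq n ^ 3 / Real.log ((n:ℝ) + 1) ≤ 2 / aSeq n ^ 3 :=
        div_le_self hX.le hL1
      refine ⟨?_, ?_, ?_⟩
      · rw [himg _ _ hu, hfx _ hb0.le, hfx _ hu.le]
        refine le_trans (term_le hI hab haff1 hfpa hfpb) ?_
        rw [hva, hvb]
        have hba : bSeq n - aSeq n = aSeq (mIdx n) * Real.log ((n:ℝ) + 1) ^ 2 := by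
          unfold bSeq; ring
        rw [hba, min_eq_right hXL, abs_sub_comm, abs_of_nonneg (sub_nonneg.mpr hXL)]
        exact arith1 hX hL1 hA hn0 hAn
      · rw [himg _ _ hb0, hfx _ hc0.le, hfx _ hb0.le]
        refine le_trans (term_le hI hbc haff2 hfpb hfpc) ?_
        rw [hvb, hvc]
        have hcb : cSeq n - bSeq n = (aSeq (n + 1) - bSeq n) / 2 := by
          unfold cSeq; ring
        rw [hcb, min_eq_left hXL, abs_of_nonneg (sub_nonneg.mpr hXL)]
        have hn2 : (n:ℝ) ^ 2 ≤ aSeq (n + 1) / 2 := by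
          rw [e1]
          nlinarith [mul_nonneg (sub_nonneg.mpr hu1) (by positivity : (0:ℝ) ≤ (2:ℝ) ^ (2 * n))]
        refine arith2 hX hL1 (by linarith) hn0 ?_
        nlinarith [mul_nonneg (sub_nonneg.mpr hLn) hn0.le]
      · rw [himg _ _ hc0, hfx _ hv.le, hfx _ hc0.le]
        refine le_trans (term_le hI hca haff3 hfpc hfpa') ?_
        rw [hvc, hva']
        have hvv : aSeq n ≤ aSeq (n + 1) := by
          unfold aSeq
          exact pow_le_pow_right₀ one_le_two (Nat.pow_le_pow_left (by omega) 2)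
        have hXX : 2 / aSeq (n + 1) ^ 3 ≤ 2 / aSeq n ^ 3 :=
          div_le_div_of_nonneg_left (by norm_num) (by positivity) (pow_le_pow_left₀ hu.le hvv 3)
        rw [min_eq_right hXX, abs_sub_comm, abs_of_nonneg (sub_nonneg.mpr hXX)]
        have hac : aSeq (n + 1) - cSeq n = (aSeq (n + 1) - bSeq n) / 2 := by
          unfold cSeq; ring
        rw [hac]
        refine arith3 (by positivity) (by linarith) hn0 ?_
        have hkeyR : 2 * (n:ℝ) * aSeq (n + 1) ^ 2 ≤ aSeq n ^ 3 := by
          have := natkey n hn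
          unfold aSeq
          exact_mod_cast this
        have t5 : aSeq (n + 1) / 2 * (2 / aSeq (n + 1) ^ 3) = 1 / aSeq (n + 1) ^ 2 := by
          field_simp
        have t4 : 2 / aSeq n ^ 3 * (n:ℝ) ≤ 1 / aSeq (n + 1) ^ 2 := by
          rw [div_mul_eq_mul_div, div_le_div_iff₀ (by positivity) (by positivity)]
          nlinarith
        calc (2 / aSeq n ^ 3 - 2 / aSeq (n + 1) ^ 3) * (n:ℝ)
            ≤ 2 / aSeq n ^ 3 * (n:ℝ) :=
              mul_le_mul_of_nonneg_right (sub_le_self _ (by positivity)) hn0.le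
          _ ≤ 1 / aSeq (n + 1) ^ 2 := t4
          _ = aSeq (n + 1) / 2 * (2 / aSeq (n + 1) ^ 3) := t5.symm
          _ ≤ (aSeq (n + 1) - bSeq n) * (2 / aSeq (n + 1) ^ 3) :=
              mul_le_mul_of_nonneg_right (by linarith) (by positivity)
    have hg : Tendsto (fun n : ℕ => 2 / (n:ℝ)) atTop (nhds 0) :=
      tendsto_const_div_atTop_nhds_zero_nat 2
    have hnn : ∀ (s : Set ℝ), (∀ y ∈ s, 0 ≤ y) → (0:ℝ) ≤ sInf s := fun s h => Real.sInf_nonneg h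
    refine ⟨squeeze_zero' ?_ ?_ hg, squeeze_zero' ?_ ?_ hg, squeeze_zero' ?_ ?_ hg⟩
    · exact Eventually.of_forall fun n => div_nonneg (abs_nonneg _)
        (hnn _ (by rintro y ⟨x, -, rfl⟩; exact hfnn x))
    · exact (eventually_ge_atTop 6).mono fun n hn => (key n hn).1
    · exact Eventually.of_forall fun n => div_nonneg (abs_nonneg _)
        (hnn _ (by rintro y ⟨x, -, rfl⟩; exact hfnn x))
    · exact (eventually_ge_atTop 6).mono fun n hn => (key n hn).2.1
    · exact Eventually.of_forall fun n => div_nonneg (abs_nonneg _)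
        (hnn _ (by rintro y ⟨x, -, rfl⟩; exact hfnn x))
    · exact (eventually_ge_atTop 6).mono fun n hn => (key n hn).2.2
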